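/- Let n ≥ 1 be an integer. For a word w over {a,b}, the following three assertions are equivalent: (1) w ∈ LL({a^n b, a^n}); (2) |w|_a ≡ 0 (mod n) and for every prefix p of w one has |p|_a ≥ n·|p|_b; (3) w ∈ L_{{a^n b, a^n}}^ε. In particular LL({a^n b, a^n}) = L_{{a^n b, a^n}}^ε. -/

import Mathlib

namespace ShuffleWqo

inductive AB : Type
  | a : AB
  | b : AB
  deriving DecidableEq

open AB

/-- The word `a^n`. -/
def wa (n : ℕ) : List AB := List.replicate n a

/-- The word `b^n`. -/
def wb (n : ℕ) : List AB := List.replicate n b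

/-- Concatenation power of a word: `npow u e = u^e`. -/
def npow (u : List AB) : ℕ → List AB
  | 0 => []
  | n + 1 => u ++ npow u n

/-- `Shuffle u v w` means `w` is a shuffle of `u` and `v`. -/
inductive Shuffle {α : Type*} : List α → List α → List α → Prop
  | nil : Shuffle [] [] []
  | left {x : α} {u v w : List α} : Shuffle u v w → Shuffle (x :: u) v (x :: w)
  | right {x : α} {u v w : List α} : Shuffle u v w → Shuffle u (x :: v) (x :: w)

/-- One derivation step: `w` is obtained from `v` by shuffling in a word of `I`. -/
def Derives {α : Type*} (I : Set (List α)) (v w : List α) : Prop :=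
  ∃ u ∈ I, Shuffle v u w

/-- The reflexive-transitive closure `⊢*_I`. -/
def DerivesStar {α : Type*} (I : Set (List α)) : List α → List α → Prop :=
  Relation.ReflTransGen (Derives I)

/-- The shuffle closure `LL(I)` of a set of words `I`. -/
def LL {α : Type*} (I : Set (List α)) : Set (List α) := { w | DerivesStar I [] w }

/-- `r` is a well quasi-order on the language `L`. -/
def IsWqoOn {α : Type*} (r : List α → List α → Prop) (L : Set (List α)) : Prop :=
  ∀ f : ℕ → List α, (∀ n, f n ∈ L) → ∃ i j, i < j ∧ r (f i) (f j)

/-- One step of the unitary grammar: insert a word of `I` as a factor. -/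
def Inserts {α : Type*} (I : Set (List α)) (v w : List α) : Prop :=
  ∃ u ∈ I, ∃ v₁ v₂ : List α, v = v₁ ++ v₂ ∧ w = v₁ ++ u ++ v₂

/-- The language `L_I^ε` generated by the unitary grammar associated with `I`. -/
def LEps {α : Type*} (I : Set (List α)) : Set (List α) :=
  { w | Relation.ReflTransGen (Inserts I) [] w }

lemma shuffle_nil_left {α : Type*} : ∀ l : List α, Shuffle [] l l
  | [] => .nil
  | x :: t => .right (shuffle_nil_left t)

lemma shuffle_nil_right {α : Type*} : ∀ l : List α, Shuffle l [] l
  | [] => .nil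
  | x :: t => .left (shuffle_nil_right t)

lemma shuffle_count {α : Type*} [DecidableEq α] {u v w : List α} (h : Shuffle u v w)
    (x : α) : w.count x = u.count x + v.count x := by
  induction h with
  | nil => simp
  | left _ ih => simp [List.count_cons, ih]; ring
  | right _ ih => simp [List.count_cons, ih]; ring

lemma shuffle_insert {α : Type*} : ∀ (v₁ : List α) (u v₂ : List α),
    Shuffle (v₁ ++ v₂) u (v₁ ++ u ++ v₂)
  | x :: t, u, v₂ => .left (shuffle_insert t u v₂)
  | [], u, v₂ => by
      induction u with
      | nil => simpa using shuffle_nil_right v₂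
      | cons x t ih => simpa using Shuffle.right ih

lemma shuffle_prefix {α : Type*} {u v w : List α} (h : Shuffle u v w) :
    ∀ p, p <+: w → ∃ p₁ p₂, p₁ <+: u ∧ p₂ <+: v ∧ Shuffle p₁ p₂ p := by
  induction h with
  | nil => intro p hp; rw [List.prefix_nil.mp hp]; exact ⟨[], [], List.nil_prefix, List.nil_prefix, .nil⟩
  | @left x u v w h ih =>
    intro p hp
    rcases p with _ | ⟨y, p'⟩
    · exact ⟨[], [], List.nil_prefix, List.nil_prefix, .nil⟩
    · obtain ⟨rfl, hp'⟩ := List.cons_prefix_cons.mp hp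
      obtain ⟨p₁, p₂, h1, h2, h3⟩ := ih p' hp'
      exact ⟨y :: p₁, p₂, List.cons_prefix_cons.mpr ⟨rfl, h1⟩, h2, .left h3⟩
  | @right x u v w h ih =>
    intro p hp
    rcases p with _ | ⟨y, p'⟩
    · exact ⟨[], [], List.nil_prefix, List.nil_prefix, .nil⟩
    · obtain ⟨rfl, hp'⟩ := List.cons_prefix_cons.mp hp
      obtain ⟨p₁, p₂, h1, h2, h3⟩ := ih p' hp'
      exact ⟨p₁, y :: p₂, h1, List.cons_prefix_cons.mpr ⟨rfl, h2⟩, .right h3⟩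

lemma prefix_split {k : ℕ} {t p : List AB} (h : p <+: List.replicate k a ++ t) :
    (b ∉ p) ∨ ∃ q, q <+: t ∧ p = List.replicate k a ++ q := by
  obtain ⟨s, hs⟩ := h
  by_cases hl : p.length ≤ k
  · left
    have : p = (List.replicate k a ++ t).take p.length := by
      rw [← hs, List.take_append_of_le_length (by simp), List.take_length]
    rw [List.take_append_of_le_length (by simpa using hl), List.take_replicate] at this
    intro hb
    rw [this] at hb
    exact absurd (List.eq_of_mem_replicate hb) (by decide)
  · right
    push_neg at hl
    refine ⟨p.drop k, ⟨s, ?_⟩, ?_⟩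
    · have := congrArg (List.drop k) hs
      rw [List.drop_append_of_le_length hl.le, List.drop_append_of_le_length (by simp),
        List.drop_replicate] at this
      simpa using this
    · have h2 := congrArg (List.take k) hs
      rw [List.take_append_of_le_length hl.le, List.take_append_of_le_length (by simp),
        List.take_replicate, min_self] at h2
      conv_lhs => rw [← List.take_append_drop k p]
      rw [h2]

def Good (n : ℕ) (w : List AB) : Prop :=
  w.count a % n = 0 ∧ ∀ p : List AB, p <+: w → n * p.count b ≤ p.count a

lemma good_step {n : ℕ} {v u w : List AB} (hu : u ∈ ({wa n ++ [b], wa n} : Set (List AB)))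
    (hsh : Shuffle v u w) (hv : Good n v) : Good n w := by
  have hua : u.count a = n := by
    rcases hu with rfl | rfl <;>
      simp [wa, List.count_replicate, List.count_singleton']
  constructor
  · rw [shuffle_count hsh a, hua, Nat.add_mod_right]; exact hv.1
  · intro p hp
    obtain ⟨p₁, p₂, h1, h2, h3⟩ := shuffle_prefix hsh p hp
    have hc := hv.2 p₁ h1
    have hc2 : n * p₂.count b ≤ p₂.count a := by
      rcases hu with rfl | rfl
      · rcases prefix_split h2 with hbp | ⟨q, hq, rfl⟩
        · simp [List.count_eq_zero.mpr hbp]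
        · rcases q with _ | ⟨y, q'⟩
          · simp [wa, List.count_replicate]
          · obtain ⟨rfl, hq'⟩ := List.cons_prefix_cons.mp hq
            rw [List.prefix_nil.mp hq']
            simp [wa, List.count_replicate, List.count_append, List.count_cons]
      · have h2' : p₂ <+: List.replicate n a ++ [] := by simpa [wa] using h2
        rcases prefix_split h2' with hbp | ⟨q, hq, rfl⟩
        · simp [List.count_eq_zero.mpr hbp]
        · rw [List.prefix_nil.mp hq]
          simp [List.count_replicate]
    have e1 := shuffle_count h3 AB.a
    have e2 := shuffle_count h3 AB.b
    rw [e1, e2, Nat.mul_add]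
    omega


lemma ll_good {n : ℕ} {w : List AB} (h : w ∈ LL {wa n ++ [b], wa n}) : Good n w := by
  induction h with
  | refl =>
    exact ⟨by simp, fun p hp => by rw [List.prefix_nil.mp hp]; simp⟩
  | tail _ hstep ih =>
    obtain ⟨u, hu, hsh⟩ := hstep
    exact good_step hu hsh ih

lemma exists_first_b : ∀ (w : List AB), b ∈ w → ∃ m w', w = List.replicate m a ++ b :: w' := by
  intro w hw
  induction w with
  | nil => simp at hw
  | cons x t ih =>
    cases x with
    | b => exact ⟨0, t, rfl⟩
    | a =>
      have hb : b ∈ t := by simpa using hw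
      obtain ⟨m, w', hw'⟩ := ih hb
      exact ⟨m + 1, w', by simp [hw', List.replicate_succ]⟩

lemma good_to_leps {n : ℕ} (hn : 1 ≤ n) :
    ∀ w : List AB, Good n w → w ∈ LEps {wa n ++ [b], wa n} := by
  suffices H : ∀ N (w : List AB), w.length ≤ N → Good n w → w ∈ LEps {wa n ++ [b], wa n} from
    fun w h => H w.length w le_rfl h
  intro N
  induction N with
  | zero =>
    intro w hw _
    rw [List.length_eq_zero_iff.mp (Nat.le_zero.mp hw)]
    exact Relation.ReflTransGen.refl
  | succ N ih =>
    intro w hlen hg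
    by_cases hwnil : w = []
    · rw [hwnil]; exact Relation.ReflTransGen.refl
    by_cases hb : b ∈ w
    · obtain ⟨m, w', rfl⟩ := exists_first_b w hb
      have hnm : n ≤ m := by
        have := hg.2 (List.replicate m a ++ [b]) ⟨w', by simp⟩
        simpa [List.count_replicate, List.count_singleton'] using this
      set v := List.replicate (m - n) a ++ w' with hv
      have hgv : Good n v := by
        constructor
        · have h1 : (List.replicate m a ++ b :: w').count a = v.count a + n := by
            simp [hv, List.count_replicate, List.count_cons]
            omega
          have h2 := hg.1
          rw [h1, Nat.add_mod_right] at h2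
          exact h2
        · intro p hp
          rcases prefix_split hp with hbp | ⟨q, hq, rfl⟩
          · simp [List.count_eq_zero.mpr hbp]
          · obtain ⟨s, rfl⟩ := hq
            have hpre : List.replicate m a ++ b :: (q ++ s) <+:
                List.replicate m a ++ b :: (q ++ s) := List.prefix_refl _
            have := hg.2 (List.replicate m a ++ b :: q) ⟨s, by simp⟩
            simp only [List.count_append, List.count_cons, List.count_replicate] at this ⊢
            simp at this ⊢
            have hdist : n * (List.count b q + 1) = n * List.count b q + n := by ring
            omega
      have hstep : Inserts {wa n ++ [b], wa n} v (List.replicate m a ++ b :: w') := by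
        refine ⟨wa n ++ [b], Or.inl rfl, List.replicate (m - n) a, w', rfl, ?_⟩
        have hrep : List.replicate m a = List.replicate (m - n) a ++ List.replicate n a := by
          rw [← List.replicate_add]
          congr 1
          omega
        rw [hrep]
        simp only [wa, List.append_assoc, List.cons_append, List.singleton_append,
          List.nil_append]
      have hlenv : v.length ≤ N := by
        simp only [hv, List.length_append, List.length_replicate, List.length_cons] at hlen ⊢
        omega
      exact Relation.ReflTransGen.tail (ih v hlenv hgv) hstep
    · have hall : ∀ x ∈ w, a = x := by
        intro x hx
        cases x with
        | a => rfl
        | b => exact absurd hx hb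
      have hcnt : w.count a = w.length := List.count_eq_length.mpr hall
      have hlen0 : w.length % n = 0 := by rw [← hcnt]; exact hg.1
      have hpos : 0 < w.length := List.length_pos_iff.mpr hwnil
      have hge : n ≤ w.length := by
        by_contra hlt
        push_neg at hlt
        rw [Nat.mod_eq_of_lt hlt] at hlen0
        omega
      have hrep : w = List.replicate w.length a :=
        List.eq_replicate_length.mpr (fun x hx => (hall x hx).symm)
      set v := List.replicate (w.length - n) a with hv
      have hgv : Good n v := by
        constructor
        · have : v.count a = w.length - n := by simp [hv, List.count_replicate]
          rw [this]
          have h2 : w.length - n + n = w.length := by omega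
          rw [← Nat.add_mod_right, h2]
          exact hlen0
        · intro p hp
          have hbp : b ∉ p := by
            intro hbm
            have := List.eq_of_mem_replicate (hp.sublist.mem hbm)
            exact absurd this (by decide)
          simp [List.count_eq_zero.mpr hbp]
      have hstep : Inserts {wa n ++ [b], wa n} v w := by
        refine ⟨wa n, Or.inr rfl, [], v, rfl, ?_⟩
        have : List.replicate w.length a = List.replicate n a ++ List.replicate (w.length - n) a := by
          rw [← List.replicate_add]
          congr 1
          omega
        simp [wa, hv, ← this, ← hrep]
      have hlenv : v.length ≤ N := by
        simp only [hv, List.length_replicate]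
        omega
      exact Relation.ReflTransGen.tail (ih v hlenv hgv) hstep

lemma leps_to_ll {α : Type*} {I : Set (List α)} {w : List α} (h : w ∈ LEps I) : w ∈ LL I := by
  refine Relation.ReflTransGen.mono ?_ _ _ h
  rintro x y ⟨u, hu, v₁, v₂, rfl, rfl⟩
  exact ⟨u, hu, shuffle_insert v₁ u v₂⟩

theorem stmt12 (n : ℕ) (hn : 1 ≤ n) (w : List AB) :
    ((w ∈ LL {wa n ++ [b], wa n}) ↔
      (w.count a % n = 0 ∧ ∀ p : List AB, p <+: w → n * p.count b ≤ p.count a)) ∧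
    ((w.count a % n = 0 ∧ ∀ p : List AB, p <+: w → n * p.count b ≤ p.count a) ↔
      w ∈ LEps {wa n ++ [b], wa n}) ∧
    LL {wa n ++ [b], wa n} = LEps {wa n ++ [b], wa n} := by
  refine ⟨⟨fun h => ll_good h, fun h => leps_to_ll (good_to_leps hn w h)⟩,
    ⟨fun h => good_to_leps hn w h, fun h => ll_good (leps_to_ll h)⟩, ?_⟩
  ext v
  exact ⟨fun h => good_to_leps hn v (ll_good h), fun h => leps_to_ll h⟩

end ShuffleWqo
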